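/- Let M > 0 and 0 < T < 1/(4M). Let α : [0,T] → [0,∞) be continuous with α(0) ≤ 1 and α(t) ≤ 1 + t·M·α(t)² for all t ∈ [0,T]. Then α(t) ≤ 2/(1 + √(1 − 4tM)) for all t ∈ [0,T]; in particular α(t) < 2 for all t ∈ [0,T]. -/
import Mathlib


open Set

/-- If `α : [0,T] → [0,∞)` is continuous with `α 0 ≤ 1` and satisfies
`α t ≤ 1 + t·M·(α t)²` on `[0,T]` where `0 < T < 1/(4M)`, then
`α t ≤ 2/(1 + √(1 - 4tM))` on `[0,T]`; in particular `α t < 2` on `[0,T]`. -/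
theorem continuous_quadratic_bound
    (M T : ℝ) (hM : 0 < M) (hT0 : 0 < T) (hT : T < 1 / (4 * M))
    (α : ℝ → ℝ) (hαcont : ContinuousOn α (Icc 0 T))
    (hαnonneg : ∀ t ∈ Icc (0:ℝ) T, 0 ≤ α t)
    (hα0 : α 0 ≤ 1)
    (hαineq : ∀ t ∈ Icc (0:ℝ) T, α t ≤ 1 + t * M * (α t) ^ 2) :
    ∀ t ∈ Icc (0:ℝ) T,
      α t ≤ 2 / (1 + Real.sqrt (1 - 4 * t * M)) ∧ α t < 2 := by
  have hTM : T * M < 1 / 4 := by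
    rw [lt_div_iff₀ (by positivity)] at hT; linarith
  have hlt2 : ∀ t ∈ Icc (0:ℝ) T, α t < 2 := by
    intro t ht
    by_contra h
    push_neg at h
    have hsub : Icc (0:ℝ) t ⊆ Icc 0 T := Icc_subset_Icc le_rfl ht.2
    have hmem : (2:ℝ) ∈ Icc (α 0) (α t) := ⟨by linarith, h⟩
    obtain ⟨s, hs, hs2⟩ := intermediate_value_Icc ht.1 (hαcont.mono hsub) hmem
    have hsT : s ∈ Icc (0:ℝ) T := ⟨hs.1, hs.2.trans ht.2⟩
    have hq := hαineq s hsT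
    rw [hs2] at hq
    nlinarith [hs.1, hsT.2]
  intro t ht
  have h2 := hlt2 t ht
  refine ⟨?_, h2⟩
  have htM : t * M < 1 / 4 := lt_of_le_of_lt (by nlinarith [ht.1, ht.2]) hTM
  have h1 : 0 < 1 - 4 * t * M := by linarith
  set s := Real.sqrt (1 - 4 * t * M) with hsdef
  have hs2 : s ^ 2 = 1 - 4 * t * M := Real.sq_sqrt h1.le
  have hspos : 0 < s := Real.sqrt_pos.mpr h1
  have hs1 : s ≤ 1 := by
    rw [show (1:ℝ) = Real.sqrt 1 from (Real.sqrt_one).symm]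
    exact Real.sqrt_le_sqrt (by nlinarith [ht.1])
  rw [le_div_iff₀ (by linarith)]
  have hαn := hαnonneg t ht
  have hq := hαineq t ht
  nlinarith [mul_nonneg hspos.le hαn, sq_nonneg (α t * (1 + s) - 2), sq_nonneg (α t * (1 - s) - 2), mul_nonneg hαn hαn]
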